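/- Let π ≤ β ≤ 2π and π/2 ≤ γ ≤ π, let ψ be the normalized positive solution with c = c_β, and set f(θ) = ψ'(θ)/ψ(θ). For each θ ∈ [π/2, 3π/2 − γ] let θ₁ ∈ (0, π/2] be the angle uniquely determined by cot θ₁ = −cos(θ+γ). Then f(θ₁) ≥ f(θ)·(1 + cos²(θ+γ))/(2 + sin(θ+γ)). -/

import Mathlib

open Real Set Filter
open scoped Classical

/-- `c` solves the Hardy-constant equation for the angle `β`. -/
def hardyEq (c β : ℝ) : Prop :=
  Real.sqrt c * Real.tan (Real.sqrt c * ((β - Real.pi) / 2)) =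
    2 * (Real.Gamma ((3 + Real.sqrt (1 - 4 * c)) / 4) /
         Real.Gamma ((1 + Real.sqrt (1 - 4 * c)) / 4)) ^ 2

/-- `βcr` is the critical angle: the unique angle in `(π, 2π)` with
`tan((βcr − π)/4) = 4 (Γ(3/4)/Γ(1/4))²`. -/
def isBetaCr (βcr : ℝ) : Prop :=
  βcr ∈ Set.Ioo Real.pi (2 * Real.pi) ∧
    Real.tan ((βcr - Real.pi) / 4) = 4 * (Real.Gamma (3 / 4) / Real.Gamma (1 / 4)) ^ 2

/-- `c = c_β`: for `β ≤ βcr`, `c = 1/4`; for `β > βcr`, `c` is the unique solution in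
`(0, 1/4]` of the Hardy-constant equation for `β`. -/
def isHardyConst (βcr β c : ℝ) : Prop :=
  (β ≤ βcr ∧ c = 1 / 4) ∨ (βcr < β ∧ c ∈ Set.Ioc (0 : ℝ) (1 / 4) ∧ hardyEq c β)

/-- The potential `V` on `(0, β)`. -/
noncomputable def Vpot (β θ : ℝ) : ℝ :=
  if θ < Real.pi / 2 then 1 / Real.sin θ ^ 2
  else if θ < β - Real.pi / 2 then 1
  else 1 / Real.sin (β - θ) ^ 2


/-- If `F` has nonpositive derivative on `[a,b]`, then `F b ≤ F a`. -/
lemma deriv_nonpos_le {F F' : ℝ → ℝ} {a b : ℝ}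
    (hF : ∀ x ∈ Set.Icc a b, HasDerivAt F (F' x) x)
    (hF' : ∀ x ∈ Set.Ioo a b, F' x ≤ 0) (hab : a ≤ b) :
    F b ≤ F a := by
  have h := antitoneOn_of_deriv_nonpos (convex_Icc a b)
    (fun x hx => (hF x hx).continuousAt.continuousWithinAt)
    (fun x hx => by
      rw [interior_Icc] at hx
      exact (hF x (Ioo_subset_Icc_self hx)).differentiableAt.differentiableWithinAt)
    (fun x hx => by
      rw [interior_Icc] at hx
      rw [(hF x (Ioo_subset_Icc_self hx)).deriv]
      exact hF' x hx)
  exact h (left_mem_Icc.2 hab) (right_mem_Icc.2 hab) hab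

lemma deriv_nonneg_le {F F' : ℝ → ℝ} {a b : ℝ}
    (hF : ∀ x ∈ Set.Icc a b, HasDerivAt F (F' x) x)
    (hF' : ∀ x ∈ Set.Ioo a b, 0 ≤ F' x) (hab : a ≤ b) :
    F a ≤ F b := by
  have h := monotoneOn_of_deriv_nonneg (convex_Icc a b)
    (fun x hx => (hF x hx).continuousAt.continuousWithinAt)
    (fun x hx => by
      rw [interior_Icc] at hx
      exact (hF x (Ioo_subset_Icc_self hx)).differentiableAt.differentiableWithinAt)
    (fun x hx => by
      rw [interior_Icc] at hx
      rw [(hF x (Ioo_subset_Icc_self hx)).deriv]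
      exact hF' x hx)
  exact h (left_mem_Icc.2 hab) (right_mem_Icc.2 hab) hab

/-- Chord bound for tangent on `[0, π/4]`. -/
lemma tan_le_chord {x : ℝ} (hx0 : 0 ≤ x) (hx1 : x ≤ Real.pi / 4) :
    Real.tan x ≤ 4 / Real.pi * x := by
  have hπ := Real.pi_pos
  -- p y = 4 y cos y - π sin y is concave on [0, π/4] with p 0 = p (π/4) = 0
  set p : ℝ → ℝ := fun y => 4 * y * Real.cos y - Real.pi * Real.sin y with hp
  have hp1 : ∀ y : ℝ, HasDerivAt p ((4 - Real.pi) * Real.cos y - 4 * (y * Real.sin y)) y := by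
    intro y
    have h1 : HasDerivAt (fun y : ℝ => 4 * y * Real.cos y)
        (4 * Real.cos y + 4 * y * (-Real.sin y)) y := by
      simpa using (((hasDerivAt_id y).const_mul (4:ℝ)).fun_mul (Real.hasDerivAt_cos y))
    have h2 := (Real.hasDerivAt_sin y).const_mul Real.pi
    have := h1.fun_sub h2
    refine this.congr_deriv (Eq.symm ?_); ring
  have hp2 : ∀ y : ℝ, HasDerivAt (fun y => (4 - Real.pi) * Real.cos y - 4 * (y * Real.sin y))
      ((4 - Real.pi) * (-Real.sin y) - 4 * (Real.sin y + y * Real.cos y)) y := by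
    intro y
    have h1 := (Real.hasDerivAt_cos y).const_mul (4 - Real.pi)
    have h2 : HasDerivAt (fun y : ℝ => y * Real.sin y) (Real.sin y + y * Real.cos y) y := by
      simpa [add_comm] using ((hasDerivAt_id y).fun_mul (Real.hasDerivAt_sin y))
    simpa using h1.fun_sub (h2.const_mul (4:ℝ))
  have hconc : ConcaveOn ℝ (Set.Icc 0 (Real.pi/4)) p := by
    apply concaveOn_of_deriv2_nonpos (convex_Icc _ _)
    · exact fun y hy => (hp1 y).continuousAt.continuousWithinAt
    · exact fun y hy => (hp1 y).differentiableAt.differentiableWithinAt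
    · intro y hy
      have : deriv p = fun y => (4 - Real.pi) * Real.cos y - 4 * (y * Real.sin y) :=
        funext fun y => (hp1 y).deriv
      rw [this]
      exact (hp2 y).differentiableAt.differentiableWithinAt
    · intro y hy
      rw [interior_Icc] at hy
      obtain ⟨hy1, hy2⟩ := hy
      have hd1 : deriv p = fun y => (4 - Real.pi) * Real.cos y - 4 * (y * Real.sin y) :=
        funext fun y => (hp1 y).deriv
      have : deriv (deriv p) y = (4 - Real.pi) * (-Real.sin y) - 4 * (Real.sin y + y * Real.cos y) := by
        rw [hd1]; exact (hp2 y).deriv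
      simp only [Function.iterate_succ, Function.iterate_zero, Function.comp_apply, id_eq]
      rw [this]
      have hs : 0 ≤ Real.sin y := Real.sin_nonneg_of_nonneg_of_le_pi hy1.le (by linarith)
      have hc : 0 ≤ Real.cos y := Real.cos_nonneg_of_mem_Icc ⟨by linarith, by linarith⟩
      nlinarith [mul_nonneg hy1.le hc, mul_nonneg hs (show (0:ℝ) ≤ 8 - Real.pi by nlinarith [Real.pi_lt_d2])]
  have hp0 : p 0 = 0 := by simp [hp]
  have hpq : p (Real.pi/4) = 0 := by
    simp [hp, Real.cos_pi_div_four, Real.sin_pi_div_four]; ring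
  -- x = (1 - 4x/π) • 0 + (4x/π) • (π/4)
  have hxmem : p x ≥ 0 := by
    have h4 : (0:ℝ) ≤ 1 - 4/Real.pi * x := by
      rw [sub_nonneg]
      calc 4/Real.pi * x ≤ 4/Real.pi * (Real.pi/4) := by
            apply mul_le_mul_of_nonneg_left hx1 (by positivity)
        _ = 1 := by field_simp
    have h5 : (0:ℝ) ≤ 4/Real.pi * x := by positivity
    have := hconc.2 (Set.left_mem_Icc.2 (by positivity)) (Set.right_mem_Icc.2 (by positivity))
      h4 h5 (by ring)
    have hx' : (1 - 4/Real.pi * x) • (0:ℝ) + (4/Real.pi * x) • (Real.pi/4) = x := by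
      simp [smul_eq_mul]; field_simp
    rw [hx'] at this
    simpa [hp0, hpq] using this
  -- conclude
  have hcx : 0 < Real.cos x := Real.cos_pos_of_mem_Ioo ⟨by nlinarith, by nlinarith⟩
  rw [Real.tan_eq_sin_div_cos, div_le_iff₀ hcx]
  have h6 : Real.pi * Real.sin x ≤ 4 * x * Real.cos x := by
    have := hxmem; simp only [hp] at this; linarith
  have h7 : 4 / Real.pi * x * Real.cos x = (4 * x * Real.cos x) / Real.pi := by ring
  rw [h7, le_div_iff₀ hπ]
  linarith

/-- Key algebraic inequality. -/
lemma key_ineq {s m : ℝ} (hs0 : 0 ≤ s) (hs1 : s ≤ 1) (hm0 : 0 ≤ m)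
    (hm2 : m ^ 2 = 1 - s ^ 2) : 4 * s * (1 - s) ≤ m * (2 - s) := by
  nlinarith [sq_nonneg (m - s), sq_nonneg (m - 1), sq_nonneg (2*m - 1), sq_nonneg (m + s - 1),
    mul_nonneg hm0 hs0, sq_nonneg (2*m - s), sq_nonneg (2*m + s - 2), mul_nonneg (mul_nonneg hm0 hs0) hs0]

/-- The hypotheses of the main theorem are contradictory when `β = π`:
the normalized solution cannot have `ψ'(π/2) = 0`. -/
lemma beta_pi_contradiction (ψ ψ' : ℝ → ℝ)
    (hpos : ∀ x ∈ Set.Ioo 0 Real.pi, 0 < ψ x)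
    (hder : ∀ x ∈ Set.Ioo 0 Real.pi, HasDerivAt ψ (ψ' x) x)
    (hode : ∀ x ∈ Set.Ioo 0 Real.pi,
      HasDerivAt ψ' (-(1/4 * (1 / Real.sin x ^ 2) * ψ x)) x)
    (hbc : ψ' (Real.pi / 2) = 0)
    (hnorm : Filter.Tendsto (fun x => ψ x / x ^ ((1:ℝ)/2)) (nhdsWithin 0 (Set.Ioi 0))
      (nhds 1)) :
    False := by
  have hπ := Real.pi_pos
  have hsin : ∀ x ∈ Set.Ioo (0:ℝ) Real.pi, 0 < Real.sin x :=
    fun x hx => Real.sin_pos_of_pos_of_lt_pi hx.1 hx.2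
  set w : ℝ → ℝ := fun x => Real.sqrt (Real.sin x) with hwdef
  set w' : ℝ → ℝ := fun x => Real.cos x / (2 * Real.sqrt (Real.sin x)) with hw'def
  have hwpos : ∀ x ∈ Set.Ioo (0:ℝ) Real.pi, 0 < w x :=
    fun x hx => Real.sqrt_pos.2 (hsin x hx)
  have hw : ∀ x ∈ Set.Ioo (0:ℝ) Real.pi, HasDerivAt w (w' x) x := by
    intro x hx
    exact (Real.hasDerivAt_sin x).sqrt (ne_of_gt (hsin x hx))
  have hw' : ∀ x ∈ Set.Ioo (0:ℝ) Real.pi,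
      HasDerivAt w' (-(1/4 * (1 / Real.sin x ^ 2) * w x) - 1/4 * w x) x := by
    intro x hx
    have hs := hsin x hx
    have hwx := hwpos x hx
    have h2w : (2 : ℝ) * w x ≠ 0 := by positivity
    have hq := (Real.hasDerivAt_cos x).fun_div ((hw x hx).const_mul 2) h2w
    refine hq.congr_deriv (Eq.symm ?_)
    have hss : w x * w x = Real.sin x := Real.mul_self_sqrt hs.le
    have hcos : Real.cos x ^ 2 = 1 - Real.sin x ^ 2 := Real.cos_sq' x
    simp only [hwdef, hw'def]
    have hss' : Real.sqrt (Real.sin x) * Real.sqrt (Real.sin x) = Real.sin x :=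
      Real.mul_self_sqrt hs.le
    have hwx' : Real.sqrt (Real.sin x) ≠ 0 := by
      simp only [hwdef] at hwx; exact ne_of_gt hwx
    field_simp
    linear_combination ((-4) * (1 + Real.sin x ^ 2) * (Real.sqrt (Real.sin x) * Real.sqrt (Real.sin x)) + 4 * Real.sin x ^ 3 - 4 * Real.sin x) * hss' + (4 * Real.sin x ^ 2) * hcos
  set W : ℝ → ℝ := fun x => ψ' x * w x - ψ x * w' x with hWdef
  have hW : ∀ x ∈ Set.Ioo (0:ℝ) Real.pi, HasDerivAt W (1/4 * (ψ x * w x)) x := by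
    intro x hx
    have h := ((hode x hx).fun_mul (hw x hx)).fun_sub ((hder x hx).fun_mul (hw' x hx))
    refine h.congr_deriv (Eq.symm ?_)
    ring
  have hWhalf : W (Real.pi/2) = 0 := by
    simp only [hWdef, hw'def, hbc, Real.cos_pi_div_two, zero_div, mul_zero, zero_mul,
      sub_zero, zero_sub, neg_eq_zero]
  have hsub1 : Set.Icc (Real.pi/4) (Real.pi/2) ⊆ Set.Ioo 0 Real.pi := by
    intro x hx; exact ⟨by linarith [hx.1], by linarith [hx.2]⟩
  have hW4 : W (Real.pi/4) < 0 := by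
    have hmono := strictMonoOn_of_deriv_pos (convex_Icc (Real.pi/4) (Real.pi/2))
      (fun x hx => (hW x (hsub1 hx)).continuousAt.continuousWithinAt)
      (fun x hx => by
        rw [interior_Icc] at hx
        have hx' : x ∈ Set.Ioo (0:ℝ) Real.pi := hsub1 (Set.Ioo_subset_Icc_self hx)
        rw [(hW x hx').deriv]
        have := hpos x hx'
        have := hwpos x hx'
        positivity)
    have := hmono (Set.left_mem_Icc.2 (by linarith)) (Set.right_mem_Icc.2 (by linarith))
      (by linarith)
    rwa [hWhalf] at this
  set δ : ℝ := -W (Real.pi/4) with hδdef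
  have hδ : 0 < δ := by simp only [hδdef]; linarith
  have hWle : ∀ x, 0 < x → x ≤ Real.pi/4 → W x ≤ -δ := by
    intro x hx0 hx4
    have hsub2 : Set.Icc x (Real.pi/4) ⊆ Set.Ioo 0 Real.pi := by
      intro y hy; exact ⟨by linarith [hy.1], by linarith [hy.2]⟩
    have := deriv_nonneg_le (F := W) (F' := fun y => 1/4 * (ψ y * w y))
      (fun y hy => hW y (hsub2 hy))
      (fun y hy => by
        have hy' := hsub2 (Set.Ioo_subset_Icc_self hy)
        have := hpos y hy'
        have := hwpos y hy'
        positivity) hx4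
    simp only [hδdef]; linarith
  set q : ℝ → ℝ := fun x => ψ x / w x with hqdef
  have hq : ∀ x ∈ Set.Ioo (0:ℝ) Real.pi, HasDerivAt q (W x / w x ^ 2) x := by
    intro x hx
    exact (hder x hx).div (hw x hx) (ne_of_gt (hwpos x hx))
  set G : ℝ → ℝ := fun x => q x + δ * Real.log x with hGdef
  have hGanti : ∀ t, 0 < t → t ≤ Real.pi/4 → G (Real.pi/4) ≤ G t := by
    intro t ht0 ht4
    have hsub2 : Set.Icc t (Real.pi/4) ⊆ Set.Ioo 0 Real.pi := by
      intro y hy; exact ⟨by linarith [hy.1], by linarith [hy.2]⟩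
    refine deriv_nonpos_le (F := G) (F' := fun y => W y / w y ^ 2 + δ * y⁻¹)
      (fun y hy => ?_) (fun y hy => ?_) ht4
    · have hy' := hsub2 hy
      exact (hq y hy').add ((Real.hasDerivAt_log (ne_of_gt hy'.1)).const_mul δ)
    · show W y / w y ^ 2 + δ * y⁻¹ ≤ 0
      have hy' := hsub2 (Set.Ioo_subset_Icc_self hy)
      have hsy := hsin y hy'
      have hwy := hwpos y hy'
      have hw2 : w y ^ 2 = Real.sin y := Real.sq_sqrt hsy.le
      have hWy : W y ≤ -δ := hWle y hy'.1 (Set.Ioo_subset_Icc_self hy).2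
      have h1 : W y / w y ^ 2 ≤ -δ / Real.sin y := by
        rw [hw2]
        gcongr
      have h2 : δ / y ≤ δ / Real.sin y :=
        div_le_div_of_nonneg_left hδ.le hsy (Real.sin_le hy'.1.le)
      have h3 : δ * y⁻¹ = δ / y := (div_eq_mul_inv δ y).symm
      rw [h3]
      have h5 := add_le_add h1 h2
      have h6 : -δ / Real.sin y + δ / Real.sin y = 0 := by ring
      linarith
  -- q tends to 1 at 0+
  have hslope : Filter.Tendsto (fun t => Real.sin t / t) (nhdsWithin 0 {(0:ℝ)}ᶜ) (nhds 1) := by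
    have h := Real.hasDerivAt_sin 0
    rw [hasDerivAt_iff_tendsto_slope] at h
    rw [Real.cos_zero] at h
    refine h.congr fun t => ?_
    simp [slope_def_field]
  have hts : Filter.Tendsto (fun t => t / Real.sin t) (nhdsWithin 0 (Set.Ioi 0)) (nhds 1) := by
    have h2 := (hslope.mono_left
      (nhdsWithin_mono 0 (fun x (hx : x ∈ Set.Ioi (0:ℝ)) => ne_of_gt hx))).inv₀ one_ne_zero
    rw [inv_one] at h2
    refine h2.congr fun t => ?_
    rw [inv_div]
  have hroot : Filter.Tendsto (fun t => Real.sqrt (t / Real.sin t))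
      (nhdsWithin 0 (Set.Ioi 0)) (nhds 1) := by
    have := (Real.continuous_sqrt.tendsto 1).comp hts
    rwa [Real.sqrt_one] at this
  have hq1 : Filter.Tendsto q (nhdsWithin 0 (Set.Ioi 0)) (nhds 1) := by
    have hmain := hnorm.mul hroot
    rw [one_mul] at hmain
    refine hmain.congr' ?_
    have hevπ : ∀ᶠ t in nhdsWithin 0 (Set.Ioi (0:ℝ)), t < Real.pi :=
      Filter.Eventually.filter_mono nhdsWithin_le_nhds (eventually_lt_nhds hπ)
    filter_upwards [eventually_mem_nhdsWithin, hevπ] with t ht0 htπ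
    have ht0' : (0:ℝ) < t := ht0
    have hst : 0 < Real.sin t := hsin t ⟨ht0', htπ⟩
    have h1 : Real.sqrt (t / Real.sin t) = Real.sqrt t / Real.sqrt (Real.sin t) :=
      Real.sqrt_div ht0'.le _
    have h2 : t ^ ((1:ℝ)/2) = Real.sqrt t := (Real.sqrt_eq_rpow t).symm
    rw [h1, h2]
    have hst' : Real.sqrt (Real.sin t) ≠ 0 := ne_of_gt (Real.sqrt_pos.2 hst)
    have htt : Real.sqrt t ≠ 0 := ne_of_gt (Real.sqrt_pos.2 ht0')
    simp only [hqdef, hwdef]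
    field_simp
  have e1 : ∀ᶠ t in nhdsWithin 0 (Set.Ioi (0:ℝ)), q t < 2 :=
    hq1.eventually_lt_const (by norm_num)
  have e2 : ∀ᶠ t in nhdsWithin 0 (Set.Ioi (0:ℝ)),
      Real.log t < (G (Real.pi/4) - 2) / δ :=
    Real.tendsto_log_nhdsGT_zero.eventually (eventually_lt_atBot _)
  have e3 : ∀ᶠ t in nhdsWithin 0 (Set.Ioi (0:ℝ)), t < Real.pi/4 :=
    Filter.Eventually.filter_mono nhdsWithin_le_nhds (eventually_lt_nhds (by linarith))
  obtain ⟨t, h1, h2, h3, h4⟩ :=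
    (e1.and (e2.and (e3.and eventually_mem_nhdsWithin))).exists
  have h4' : (0:ℝ) < t := h4
  have h5 := hGanti t h4' h3.le
  have h6 : δ * Real.log t < G (Real.pi/4) - 2 := by
    have := (lt_div_iff₀ hδ).1 h2
    linarith
  simp only [hGdef] at h5 h6
  linarith

set_option maxHeartbeats 1600000 in
/-- Let `ψ` be the normalized positive solution (extended symmetrically to `(0, β)`) of
`−ψ'' = c_β·V·ψ` with `ψ'(β/2) = 0` and `ψ(θ)/θ^α → 1` as `θ → 0+`, and `f = ψ'/ψ`.
For `π/2 ≤ γ ≤ π` and `θ ∈ [π/2, 3π/2 − γ]`, if `θ₁ ∈ (0, π/2]` satisfies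
`cot θ₁ = −cos(θ+γ)`, then `f(θ₁) ≥ f(θ)·(1 + cos²(θ+γ))/(2 + sin(θ+γ))`. -/
theorem f_comparison_parabola
    (β βcr cβ α : ℝ) (ψ ψ' : ℝ → ℝ)
    (hβ1 : Real.pi ≤ β) (hβ2 : β ≤ 2 * Real.pi)
    (hβcr : isBetaCr βcr) (hcβ : isHardyConst βcr β cβ)
    (hα : α = (1 + Real.sqrt (1 - 4 * cβ)) / 2)
    (hpos : ∀ θ ∈ Set.Ioo 0 β, 0 < ψ θ)
    (hder : ∀ θ ∈ Set.Ioo 0 β, HasDerivAt ψ (ψ' θ) θ)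
    (hode : ∀ θ ∈ Set.Ioo 0 β, HasDerivAt ψ' (-(cβ * Vpot β θ * ψ θ)) θ)
    (hbc : ψ' (β / 2) = 0)
    (hsym : ∀ θ, ψ (β - θ) = ψ θ)
    (hnorm : Filter.Tendsto (fun θ => ψ θ / θ ^ α) (nhdsWithin 0 (Set.Ioi 0)) (nhds 1))
    (γ θ θ₁ : ℝ) (hγ1 : Real.pi / 2 ≤ γ) (hγ2 : γ ≤ Real.pi)
    (hθ : θ ∈ Set.Icc (Real.pi / 2) (3 * Real.pi / 2 - γ))
    (hθ₁ : θ₁ ∈ Set.Ioc 0 (Real.pi / 2))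
    (hcot : Real.cot θ₁ = -Real.cos (θ + γ)) :
    ψ' θ / ψ θ * ((1 + Real.cos (θ + γ) ^ 2) / (2 + Real.sin (θ + γ))) ≤
      ψ' θ₁ / ψ θ₁ := by
  have hπ := Real.pi_pos
  have hc0 : 0 < cβ := by
    rcases hcβ with ⟨_, hc⟩ | ⟨_, hc, _⟩
    · rw [hc]; norm_num
    · exact hc.1
  have hc4 : cβ ≤ 1/4 := by
    rcases hcβ with ⟨_, hc⟩ | ⟨_, hc, _⟩
    · rw [hc]
    · exact hc.2
  -- Step 0 : β cannot equal π
  have hβπ : Real.pi < β := by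
    rcases lt_or_eq_of_le hβ1 with hlt | heq
    · exact hlt
    exfalso
    have heq' : β = Real.pi := heq.symm
    subst heq'
    have hcc : cβ = 1/4 := by
      rcases hcβ with ⟨_, hc⟩ | ⟨hlt, _, _⟩
      · exact hc
      · exact absurd hβcr.1.1 (by linarith)
    have hα2 : α = (1:ℝ)/2 := by
      rw [hα, hcc]
      norm_num
    refine beta_pi_contradiction ψ ψ' hpos hder ?_ hbc ?_
    · intro x hx
      have hVx : Vpot Real.pi x = 1 / Real.sin x ^ 2 := by
        unfold Vpot
        rcases lt_or_ge x (Real.pi/2) with h1 | h1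
        · rw [if_pos h1]
        · rw [if_neg (not_lt.2 h1), if_neg (not_lt.2 (by linarith)), Real.sin_pi_sub]
      have h := hode x hx
      rw [hcc, hVx] at h
      exact h
    · rw [← hα2]
      exact hnorm
  -- basic setup
  have hV1 : ∀ x ∈ Set.Ioo (0:ℝ) β, 1 ≤ Vpot β x := by
    intro x hx
    unfold Vpot
    split_ifs with h1 h2
    · have hsx : 0 < Real.sin x := Real.sin_pos_of_pos_of_lt_pi hx.1 (by linarith)
      have hsx1 : Real.sin x ≤ 1 := Real.sin_le_one x
      rw [le_div_iff₀ (by positivity)]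
      nlinarith
    · exact le_refl 1
    · push_neg at h2
      have h3 : 0 < Real.sin (β - x) :=
        Real.sin_pos_of_pos_of_lt_pi (by linarith [hx.2]) (by linarith [h2, hπ])
      have h4 : Real.sin (β - x) ≤ 1 := Real.sin_le_one _
      rw [le_div_iff₀ (by positivity)]
      nlinarith
  set f : ℝ → ℝ := fun x => ψ' x / ψ x with hfdef
  have hfder : ∀ x ∈ Set.Ioo (0:ℝ) β, HasDerivAt f (-(cβ * Vpot β x) - f x ^ 2) x := by
    intro x hx
    have h := (hode x hx).fun_div (hder x hx) (ne_of_gt (hpos x hx))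
    refine h.congr_deriv (Eq.symm ?_)
    have hψ := hpos x hx
    simp only [hfdef]
    field_simp
  have hg : ∀ u v, u ∈ Set.Ioo (0:ℝ) β → v ∈ Set.Ioo (0:ℝ) β → u ≤ v →
      f v + cβ * v ≤ f u + cβ * u := by
    intro u v hu hv huv
    have hsub : Set.Icc u v ⊆ Set.Ioo 0 β :=
      fun y hy => ⟨lt_of_lt_of_le hu.1 hy.1, lt_of_le_of_lt hy.2 hv.2⟩
    refine deriv_nonpos_le (F := fun x => f x + cβ * x)
      (F' := fun x => (-(cβ * Vpot β x) - f x ^ 2) + cβ) (fun x hx => ?_) (fun x hx => ?_) huv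
    · have h1 := (hfder x (hsub hx)).fun_add ((hasDerivAt_id x).const_mul cβ)
      simpa using h1
    · show (-(cβ * Vpot β x) - f x ^ 2) + cβ ≤ 0
      have h1 := hV1 x (hsub (Set.Ioo_subset_Icc_self hx))
      nlinarith [sq_nonneg (f x), mul_le_mul_of_nonneg_left h1 hc0.le]
  have hθγ1 : Real.pi ≤ θ + γ := by have := hθ.1; linarith
  have hθγ2 : θ + γ ≤ 3 * Real.pi / 2 := by have := hθ.2; linarith
  obtain ⟨m, hmdef⟩ : ∃ m : ℝ, m = -Real.cos (θ + γ) := ⟨_, rfl⟩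
  obtain ⟨s, hsdef⟩ : ∃ s : ℝ, s = -Real.sin (θ + γ) := ⟨_, rfl⟩
  have hm0 : 0 ≤ m := by
    have := Real.cos_nonpos_of_pi_div_two_le_of_le (x := θ + γ) (by linarith) (by linarith)
    rw [hmdef]; linarith
  have hm1 : m ≤ 1 := by
    have := Real.neg_one_le_cos (θ + γ)
    rw [hmdef]; linarith
  have hs0 : 0 ≤ s := by
    have h1 : 0 ≤ Real.sin (θ + γ - Real.pi) :=
      Real.sin_nonneg_of_nonneg_of_le_pi (by linarith) (by linarith)
    rw [Real.sin_sub_pi] at h1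
    rw [hsdef]; linarith
  have hs1 : s ≤ 1 := by
    have := Real.neg_one_le_sin (θ + γ)
    rw [hsdef]; linarith
  have hms : m ^ 2 = 1 - s ^ 2 := by
    rw [hmdef, hsdef]
    linear_combination Real.sin_sq_add_cos_sq (θ + γ)
  have h2s : (0:ℝ) < 2 - s := by linarith
  have hgoal : (1 + Real.cos (θ + γ) ^ 2) / (2 + Real.sin (θ + γ)) = (1 + m ^ 2) / (2 - s) := by
    rw [hmdef, hsdef]
    ring
  show f θ * ((1 + Real.cos (θ + γ) ^ 2) / (2 + Real.sin (θ + γ))) ≤ f θ₁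
  rw [hgoal]
  have hθmem : θ ∈ Set.Ioo (0:ℝ) β := ⟨by linarith [hθ.1], by linarith [hθ.2]⟩
  have hθ₁mem : θ₁ ∈ Set.Ioo (0:ℝ) β := ⟨hθ₁.1, by linarith [hθ₁.2]⟩
  have hβ2mem : β/2 ∈ Set.Ioo (0:ℝ) β := ⟨by linarith, by linarith⟩
  have hfβ2 : f (β/2) = 0 := by
    show ψ' (β/2) / ψ (β/2) = 0
    rw [hbc]; exact zero_div _
  rcases le_or_gt (f θ) 0 with hneg | hposθ
  · -- easy case : f θ ≤ 0
    have hk : 0 ≤ (1 + m ^ 2) / (2 - s) := div_nonneg (by positivity) (by linarith)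
    have h1 : f θ * ((1 + m ^ 2) / (2 - s)) ≤ 0 := mul_nonpos_of_nonpos_of_nonneg hneg hk
    have h2 := hg θ₁ (β/2) hθ₁mem hβ2mem (by linarith [hθ₁.2])
    rw [hfβ2] at h2
    have h3 : cβ * θ₁ ≤ cβ * (β/2) := mul_le_mul_of_nonneg_left (by linarith [hθ₁.2]) hc0.le
    linarith
  · -- hard case : f θ > 0
    have hθβ2 : θ < β/2 := by
      by_contra hcon
      push_neg at hcon
      have h2 := hg (β/2) θ hβ2mem hθmem hcon
      rw [hfβ2] at h2
      have h3 : cβ * (β/2) ≤ cβ * θ := mul_le_mul_of_nonneg_left hcon hc0.le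
      linarith
    have hπ2mem : Real.pi/2 ∈ Set.Ioo (0:ℝ) β := ⟨by linarith, by linarith⟩
    have hsqc : 0 < Real.sqrt cβ := Real.sqrt_pos.2 hc0
    have hcs : Real.sqrt cβ * Real.sqrt cβ = cβ := Real.mul_self_sqrt hc0.le
    have hVmid : ∀ x, Real.pi/2 ≤ x → x ≤ β/2 → Vpot β x = 1 := by
      intro x h1 h2
      unfold Vpot
      rw [if_neg (not_lt.2 h1), if_pos (by linarith)]
    set h : ℝ → ℝ := fun x => Real.arctan (f x / Real.sqrt cβ) + Real.sqrt cβ * x with hhdef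
    have hhder : ∀ x ∈ Set.Ico (Real.pi/2) (β/2), HasDerivWithinAt h 0 (Set.Ici x) x := by
      intro x hx
      have hxmem : x ∈ Set.Ioo (0:ℝ) β := ⟨by linarith [hx.1], by linarith [hx.2]⟩
      have hV := hVmid x hx.1 hx.2.le
      have h1 := ((hfder x hxmem).div_const (Real.sqrt cβ)).arctan
      have h2 := (hasDerivAt_id x).const_mul (Real.sqrt cβ)
      have h3 := h1.add h2
      have heq : 1 / (1 + (f x / Real.sqrt cβ) ^ 2) * ((-(cβ * Vpot β x) - f x ^ 2) / Real.sqrt cβ)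
          + Real.sqrt cβ * 1 = 0 := by
        rw [hV]
        have hne : (0:ℝ) < 1 + (f x / Real.sqrt cβ) ^ 2 := by positivity
        field_simp
        linear_combination (Real.sqrt cβ) * hcs
      rw [heq] at h3
      exact h3.hasDerivWithinAt
    have hhcont : ContinuousOn h (Set.Icc (Real.pi/2) (β/2)) := by
      intro x hx
      have hxmem : x ∈ Set.Ioo (0:ℝ) β := ⟨by linarith [hx.1], by linarith [hx.2]⟩
      have hfc : ContinuousAt f x :=
        (hode x hxmem).continuousAt.div (hder x hxmem).continuousAt (ne_of_gt (hpos x hxmem))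
      have h1 : ContinuousAt h x := by
        apply ContinuousAt.add
        · exact (Real.continuous_arctan.continuousAt).comp (hfc.div_const _)
        · exact (continuous_const.mul continuous_id).continuousAt
      exact h1.continuousWithinAt
    have hconst := constant_of_has_deriv_right_zero hhcont hhder
    have hc2 := hconst (β/2) (Set.right_mem_Icc.2 (by linarith))
    obtain ⟨lam, hlamdef⟩ : ∃ lam : ℝ, lam = Real.sqrt cβ * (β - Real.pi) / 2 := ⟨_, rfl⟩
    have harc : Real.arctan (f (Real.pi/2) / Real.sqrt cβ) = lam := by
      have hb2 : h (β/2) = Real.sqrt cβ * (β/2) := by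
        simp only [hhdef, hfβ2, zero_div, Real.arctan_zero, zero_add]
      rw [hb2] at hc2
      simp only [hhdef] at hc2
      rw [hlamdef]
      linarith
    have hlam0 : 0 ≤ lam := by
      rw [hlamdef]
      have : 0 ≤ β - Real.pi := by linarith
      positivity
    have hlam4 : lam ≤ Real.pi/4 := by
      have h1 : Real.sqrt cβ ≤ 1/2 := by
        rw [show (1:ℝ)/2 = Real.sqrt ((1:ℝ)/4) by
          rw [show (1:ℝ)/4 = (1/2)^2 by norm_num, Real.sqrt_sq (by norm_num)]]
        exact Real.sqrt_le_sqrt hc4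
      have h2 : Real.sqrt cβ * (β - Real.pi) ≤ (1/2) * Real.pi :=
        mul_le_mul h1 (by linarith) (by linarith) (by norm_num)
      rw [hlamdef]
      linarith
    have hF0 : f (Real.pi/2) = Real.sqrt cβ * Real.tan lam := by
      have h1 := congrArg Real.tan harc
      rw [Real.tan_arctan] at h1
      rw [← h1]
      field_simp
    have hF0le : f (Real.pi/2) ≤ 2 * cβ := by
      rw [hF0]
      have htan := tan_le_chord hlam0 hlam4
      have h1 : Real.sqrt cβ * Real.tan lam ≤ Real.sqrt cβ * (4/Real.pi * lam) :=
        mul_le_mul_of_nonneg_left htan hsqc.le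
      have h2 : Real.sqrt cβ * (4/Real.pi * lam) = 2 * cβ * ((β - Real.pi)/Real.pi) := by
        rw [hlamdef]
        field_simp
        linear_combination (4 * (β - Real.pi)) * hcs
      have h3 : (β - Real.pi)/Real.pi ≤ 1 := by
        rw [div_le_one hπ]; linarith
      have h4 : 2 * cβ * ((β - Real.pi)/Real.pi) ≤ 2 * cβ * 1 :=
        mul_le_mul_of_nonneg_left h3 (by linarith)
      linarith
    have hfθF0 : f θ ≤ f (Real.pi/2) := by
      have h2 := hg (Real.pi/2) θ hπ2mem hθmem hθ.1
      have h3 : cβ * (Real.pi/2) ≤ cβ * θ := mul_le_mul_of_nonneg_left hθ.1 hc0.le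
      linarith
    have hric := hg θ₁ θ hθ₁mem hθmem (by linarith [hθ₁.2, hθ.1])
    obtain ⟨a, hadef⟩ : ∃ a : ℝ, a = Real.pi/2 - θ₁ := ⟨_, rfl⟩
    have ha0 : 0 ≤ a := by rw [hadef]; linarith [hθ₁.2]
    have htana : Real.tan a = m := by
      rw [hadef, Real.tan_pi_div_two_sub, Real.tan_eq_sin_div_cos, inv_div,
        ← Real.cot_eq_cos_div_sin, hcot, hmdef]
    have haπ4 : a ≤ Real.pi/4 := by
      by_contra hcon
      push_neg at hcon
      have h2 : Real.tan (Real.pi/4) < Real.tan a :=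
        Real.tan_lt_tan_of_nonneg_of_lt_pi_div_two (by positivity)
          (by rw [hadef]; linarith [hθ₁.1]) hcon
      rw [Real.tan_pi_div_four, htana] at h2
      linarith
    have hcosa : 1/2 ≤ Real.cos a := by
      have h2 : Real.cos (Real.pi/4) ≤ Real.cos a :=
        Real.cos_le_cos_of_nonneg_of_le_pi ha0 (by linarith) haπ4
      rw [Real.cos_pi_div_four] at h2
      nlinarith [Real.sq_sqrt (show (0:ℝ) ≤ 2 by norm_num), Real.sqrt_nonneg 2]
    have hm2a : m ≤ 2 * a := by
      rw [← htana, Real.tan_eq_sin_div_cos]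
      rw [div_le_iff₀ (by linarith : (0:ℝ) < Real.cos a)]
      nlinarith [Real.sin_le ha0, hcosa, ha0]
    have hkey := key_ineq hs0 hs1 hm0 hms
    have hedef : (1 + m ^ 2) / (2 - s) = 1 + (s - s ^ 2) / (2 - s) := by
      field_simp
      linear_combination hms
    have he1 : (s - s ^ 2) / (2 - s) ≤ m / 4 := by
      rw [div_le_div_iff₀ h2s (by norm_num)]
      nlinarith [hkey]
    have he0 : 0 ≤ (s - s ^ 2) / (2 - s) := div_nonneg (by nlinarith) (by linarith)
    rw [hedef]
    have hstep1 : f θ * (1 + (s - s ^ 2) / (2 - s)) = f θ + f θ * ((s - s ^ 2) / (2 - s)) := by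
      ring
    rw [hstep1]
    have hstep2 : f θ * ((s - s ^ 2) / (2 - s)) ≤ 2 * cβ * ((s - s ^ 2) / (2 - s)) :=
      mul_le_mul_of_nonneg_right (le_trans hfθF0 hF0le) he0
    have hstep3 : 2 * cβ * ((s - s ^ 2) / (2 - s)) ≤ 2 * cβ * (m / 4) :=
      mul_le_mul_of_nonneg_left he1 (by linarith)
    have hstep4 : 2 * cβ * (m / 4) ≤ 2 * cβ * (a / 2) :=
      mul_le_mul_of_nonneg_left (by linarith) (by linarith)
    have hstep5 : cβ * a ≤ cβ * (θ - θ₁) :=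
      mul_le_mul_of_nonneg_left (by rw [hadef]; linarith [hθ.1]) hc0.le
    linarith
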